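/- Let n ≥ 1 and let Λ₁ and Λ₂ be co-cyclic sublattices of ℤ^n of the same finite index m. Then Λ₁ and Λ₂ are unimodular equivalent, i.e., there exists a ℤ-module automorphism σ of ℤ^n with σ(Λ₁) = Λ₂. -/

import Mathlib

noncomputable section Stmt14Aux

/-- Projection to the 0-th coordinate followed by reduction mod `m`. -/
private def stdπ (n m : ℕ) (hn : 1 ≤ n) : (Fin n → ℤ) →ₗ[ℤ] ZMod m :=
  ((Int.castRingHom (ZMod m)).toAddMonoidHom.toIntLinearMap).comp
    (LinearMap.proj (⟨0, hn⟩ : Fin n))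

private lemma key (n : ℕ) (hn : 1 ≤ n) (m : ℕ) (hm : 1 < m) (Λ : Submodule ℤ (Fin n → ℤ))
    (hidx : Nat.card ((Fin n → ℤ) ⧸ Λ) = m) (hcyc : IsAddCyclic ((Fin n → ℤ) ⧸ Λ)) :
    ∃ σ : (Fin n → ℤ) ≃ₗ[ℤ] (Fin n → ℤ),
      Submodule.map σ.toLinearMap (LinearMap.ker (stdπ n m hn)) = Λ := by
  haveI : NeZero m := ⟨by omega⟩
  haveI : Fact (1 < m) := ⟨hm⟩
  -- an additive equivalence between the quotient and `ZMod m`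
  have e1 : ZMod m ≃+ ((Fin n → ℤ) ⧸ Λ) := hidx ▸ (zmodAddCyclicAddEquiv hcyc)
  -- the surjection `π : ℤⁿ → ZMod m` with kernel `Λ`
  set π : (Fin n → ℤ) →ₗ[ℤ] ZMod m :=
    (e1.symm.toAddMonoidHom.toIntLinearMap).comp Λ.mkQ with hπ
  have hπker : LinearMap.ker π = Λ := by
    ext x
    simp only [hπ, LinearMap.mem_ker, LinearMap.comp_apply]
    constructor
    · intro h
      have : Λ.mkQ x = 0 := by
        have := congrArg e1 h
        simpa using this
      simpa [Submodule.Quotient.mk_eq_zero] using this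
    · intro h
      have : Λ.mkQ x = 0 := by simpa [Submodule.Quotient.mk_eq_zero] using h
      simp [AddMonoidHom.toIntLinearMap, this]
  have hπsurj : Function.Surjective π := by
    intro y
    obtain ⟨q, hq⟩ := Λ.mkQ_surjective (e1 y)
    exact ⟨q, by simp [hπ, AddMonoidHom.toIntLinearMap, hq]⟩
  -- the integer coefficients of `π`
  set c : Fin n → ℤ := fun i => ((π (Pi.single i 1)).val : ℤ) with hcdef
  have hc : ∀ i, ((c i : ℤ) : ZMod m) = π (Pi.single i 1) := by
    intro i
    simp [hcdef, ZMod.natCast_val, ZMod.intCast_cast, ZMod.cast_id]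
  -- the lift `L : ℤⁿ → ℤ` of `π`
  set L : (Fin n → ℤ) →ₗ[ℤ] ℤ := ∑ i, c i • (LinearMap.proj i) with hLdef
  set castL : ℤ →ₗ[ℤ] ZMod m :=
    (Int.castRingHom (ZMod m)).toAddMonoidHom.toIntLinearMap with hcastL
  have hLsingle : ∀ i, L (Pi.single i 1) = c i := by
    intro i
    simp [hLdef, LinearMap.sum_apply, Pi.single_apply]
  have hπL : π = castL.comp L := by
    refine Module.Basis.ext (Pi.basisFun ℤ (Fin n)) (fun i => ?_)
    simp only [Pi.basisFun_apply, LinearMap.comp_apply, hLsingle]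
    rw [← hc i]
    rfl
  have hπLx : ∀ x, π x = ((L x : ℤ) : ZMod m) := by
    intro x; rw [hπL]; rfl
  -- the ideal generated by the image of `L`
  set g : ℤ := Submodule.IsPrincipal.generator (LinearMap.range L) with hgdef
  obtain ⟨v, hv⟩ : g ∈ LinearMap.range L :=
    Submodule.IsPrincipal.generator_mem (LinearMap.range L)
  have hdvd : ∀ x, g ∣ L x := fun x =>
    (Submodule.IsPrincipal.mem_iff_generator_dvd (LinearMap.range L)).mp
      (LinearMap.mem_range_self L x)
  -- the generator is a unit modulo `m`
  have hgu : IsUnit ((g : ℤ) : ZMod m) := by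
    obtain ⟨x, hx⟩ := hπsurj 1
    obtain ⟨t, ht⟩ := hdvd x
    have h1 : ((g * t : ℤ) : ZMod m) = 1 := by
      rw [← ht, ← hπLx x, hx]
    refine IsUnit.of_mul_eq_one ((t : ℤ) : ZMod m) ?_
    push_cast at h1 ⊢
    exact h1
  have hg0 : g ≠ 0 := by
    intro h0
    rw [h0, Int.cast_zero, isUnit_zero_iff] at hgu
    exact zero_ne_one hgu
  -- splitting `ℤⁿ ≃ ℤ × ker L`
  set G : ℤ × (LinearMap.ker L) →ₗ[ℤ] (Fin n → ℤ) :=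
    (LinearMap.toSpanSingleton ℤ _ v).comp (LinearMap.fst ℤ ℤ _) +
      (LinearMap.ker L).subtype.comp (LinearMap.snd ℤ ℤ _) with hGdef
  have hGapp : ∀ (t : ℤ) (w : LinearMap.ker L), G (t, w) = t • v + (w : Fin n → ℤ) := by
    intro t w; rfl
  have hGbij : Function.Bijective G := by
    constructor
    · rw [injective_iff_map_eq_zero]
      rintro ⟨t, w⟩ h
      rw [hGapp] at h
      have hL : t * g = 0 := by
        have h2 : L (t • v + (w : Fin n → ℤ)) = 0 := by rw [h, map_zero]
        rw [map_add, map_smul, hv, LinearMap.mem_ker.mp w.2, add_zero, smul_eq_mul] at h2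
        exact h2
      have ht0 : t = 0 := by
        rcases mul_eq_zero.mp hL with h' | h'
        · exact h'
        · exact absurd h' hg0
      subst ht0
      have hw : (w : Fin n → ℤ) = 0 := by simpa using h
      exact Prod.ext rfl (Subtype.ext hw)
    · intro x
      set q : ℤ := L x / g with hqdef
      have hq : q * g = L x := Int.ediv_mul_cancel (hdvd x)
      refine ⟨(q, ⟨x - q • v, ?_⟩), ?_⟩
      · simp only [LinearMap.mem_ker, map_sub, map_smul, hv, smul_eq_mul]
        omega
      · rw [hGapp]
        simp only [AddSubmonoid.mk_add_mk, Submodule.coe_mk]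
        abel
  set E : (ℤ × (LinearMap.ker L)) ≃ₗ[ℤ] (Fin n → ℤ) :=
    LinearEquiv.ofBijective G hGbij with hEdef
  -- a basis of the kernel
  obtain ⟨k, bK⟩ := Submodule.basisOfPid (Pi.basisFun ℤ (Fin n)) (LinearMap.ker L)
  set b0 : Module.Basis (Unit ⊕ Fin k) ℤ (Fin n → ℤ) :=
    (((Module.Basis.singleton Unit ℤ).prod bK).map E) with hb0def
  have hb0l : b0 (Sum.inl ()) = v := by
    simp only [hb0def, Module.Basis.map_apply, Module.Basis.prod_apply, hEdef,
      LinearEquiv.ofBijective_apply]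
    simp [hGapp]
  have hb0r : ∀ j, b0 (Sum.inr j) = (bK j : Fin n → ℤ) := by
    intro j
    simp only [hb0def, Module.Basis.map_apply, Module.Basis.prod_apply, hEdef,
      LinearEquiv.ofBijective_apply]
    simp [hGapp]
  -- counting: `1 + k = n`
  have hkn : 1 + k = n := by
    have h1 : Module.finrank ℤ (Fin n → ℤ) = n := Module.finrank_fin_fun ℤ
    have h2 : Module.finrank ℤ (Fin n → ℤ) = Fintype.card (Unit ⊕ Fin k) :=
      Module.finrank_eq_card_basis b0
    simp only [Fintype.card_sum, Fintype.card_unit, Fintype.card_fin] at h2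
    omega
  set e2 : (Unit ⊕ Fin k) ≃ Fin n :=
    ((Equiv.sumCongr (Equiv.ofUnique Unit (Fin 1)) (Equiv.refl (Fin k))).trans
      (finSumFinEquiv.trans (finCongr hkn))) with he2def
  have he2l : e2 (Sum.inl ()) = ⟨0, hn⟩ := by
    simp only [he2def, Equiv.trans_apply, Equiv.sumCongr_apply, Sum.map_inl,
      finSumFinEquiv_apply_left]
    ext
    simp
  set b : Module.Basis (Fin n) ℤ (Fin n → ℤ) := b0.reindex e2 with hbdef
  set σ : (Fin n → ℤ) ≃ₗ[ℤ] (Fin n → ℤ) :=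
    (Pi.basisFun ℤ (Fin n)).equiv b (Equiv.refl _) with hσdef
  -- multiplication by `g` on `ZMod m`
  set mulg : ZMod m →ₗ[ℤ] ZMod m :=
    (AddMonoidHom.mulLeft ((g : ℤ) : ZMod m)).toIntLinearMap with hmulgdef
  have hcomp : π.comp σ.toLinearMap = mulg.comp (stdπ n m hn) := by
    refine Module.Basis.ext (Pi.basisFun ℤ (Fin n)) (fun i => ?_)
    have hσb : σ ((Pi.basisFun ℤ (Fin n)) i) = b i := by
      rw [hσdef]
      exact Module.Basis.equiv_apply _ i _ _
    have hbi : b i = b0 (e2.symm i) := by simp [hbdef]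
    simp only [LinearMap.comp_apply, LinearEquiv.coe_coe]
    rw [hσb, hbi]
    rcases h : e2.symm i with s | j
    · -- i = e2 (inl ())
      have hi : i = ⟨0, hn⟩ := by
        have : e2 (e2.symm i) = e2 (Sum.inl ()) := by rw [h]
        rw [Equiv.apply_symm_apply, he2l] at this
        exact this
      cases s
      rw [hb0l, hπLx, hv]
      subst hi
      simp only [stdπ, hmulgdef, LinearMap.comp_apply, LinearMap.proj_apply,
        Pi.basisFun_apply, Pi.single_eq_same]
      simp [AddMonoidHom.toIntLinearMap, AddMonoidHom.mulLeft]
    · -- i = e2 (inr j)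
      have hi : i ≠ ⟨0, hn⟩ := by
        intro hcon
        rw [← he2l] at hcon
        have := congrArg e2.symm hcon
        rw [h, Equiv.symm_apply_apply] at this
        exact absurd this (by simp)
      rw [hb0r, hπLx]
      have : L ((bK j : Fin n → ℤ)) = 0 := (bK j).2
      rw [this]
      simp only [stdπ, hmulgdef, LinearMap.comp_apply, LinearMap.proj_apply,
        Pi.basisFun_apply]
      rw [Pi.single_eq_of_ne (Ne.symm hi)]
      simp [AddMonoidHom.toIntLinearMap, AddMonoidHom.mulLeft]
  refine ⟨σ, ?_⟩
  ext y
  rw [Submodule.mem_map_equiv]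
  have hyx : σ (σ.symm y) = y := σ.apply_symm_apply y
  constructor
  · intro hx
    have : π (σ (σ.symm y)) = 0 := by
      have := congrArg (fun f => f (σ.symm y)) hcomp
      simp only [LinearMap.comp_apply] at this
      rw [LinearEquiv.coe_coe] at this
      rw [this]
      have h0 : stdπ n m hn (σ.symm y) = 0 := hx
      rw [h0, map_zero]
    rw [hyx] at this
    rw [← hπker]
    exact this
  · intro hy
    have hπy : π y = 0 := by rw [← hπker] at hy; exact hy
    have : mulg (stdπ n m hn (σ.symm y)) = 0 := by
      have := congrArg (fun f => f (σ.symm y)) hcomp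
      simp only [LinearMap.comp_apply] at this
      rw [LinearEquiv.coe_coe, hyx] at this
      rw [← this, hπy]
    have hmul : ((g : ℤ) : ZMod m) * (stdπ n m hn (σ.symm y)) = 0 := this
    have := (IsUnit.mul_right_eq_zero hgu).mp hmul
    exact this

end Stmt14Aux

theorem stmt14 (n : ℕ) (hn : 1 ≤ n) (m : ℕ) (hm : 0 < m)
    (Λ₁ Λ₂ : Submodule ℤ (Fin n → ℤ))
    (hidx₁ : Nat.card ((Fin n → ℤ) ⧸ Λ₁) = m) (hidx₂ : Nat.card ((Fin n → ℤ) ⧸ Λ₂) = m)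
    (hcyc₁ : IsAddCyclic ((Fin n → ℤ) ⧸ Λ₁)) (hcyc₂ : IsAddCyclic ((Fin n → ℤ) ⧸ Λ₂)) :
    ∃ σ : (Fin n → ℤ) ≃ₗ[ℤ] (Fin n → ℤ), Submodule.map σ.toLinearMap Λ₁ = Λ₂ := by
  rcases eq_or_lt_of_le (Nat.one_le_iff_ne_zero.mpr hm.ne') with hm1 | hm1
  · -- m = 1 : both submodules are ⊤
    have htop : ∀ (Λ : Submodule ℤ (Fin n → ℤ)),
        Nat.card ((Fin n → ℤ) ⧸ Λ) = m → Λ = ⊤ := by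
      intro Λ hidx
      have : Nat.card ((Fin n → ℤ) ⧸ Λ) = 1 := by omega
      haveI : Subsingleton ((Fin n → ℤ) ⧸ Λ) := Nat.card_eq_one_iff_unique.mp this |>.1
      ext x
      simp only [Submodule.mem_top, iff_true]
      have : Λ.mkQ x = 0 := Subsingleton.elim _ _
      simpa [Submodule.Quotient.mk_eq_zero] using this
    refine ⟨LinearEquiv.refl ℤ _, ?_⟩
    rw [htop Λ₁ hidx₁, htop Λ₂ hidx₂]
    simp
  · obtain ⟨σ₁, hσ₁⟩ := key n hn m hm1 Λ₁ hidx₁ hcyc₁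
    obtain ⟨σ₂, hσ₂⟩ := key n hn m hm1 Λ₂ hidx₂ hcyc₂
    refine ⟨σ₁.symm.trans σ₂, ?_⟩
    have h1 : Submodule.map σ₁.symm.toLinearMap Λ₁ = LinearMap.ker (stdπ n m hn) := by
      rw [← hσ₁, ← Submodule.map_comp]
      simp
    rw [show (σ₁.symm.trans σ₂).toLinearMap = σ₂.toLinearMap.comp σ₁.symm.toLinearMap from rfl,
      Submodule.map_comp, h1, hσ₂]
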